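/- (Laplace transform of the bivariate Gaussian density, formula (R1).) For every r > 0, ρ ∈ (−1,1), and (x,y) ∈ ℝ² with (x,y) ≠ (0,0): ∫₀^∞ e^{−rt} · (2πt√(1−ρ²))^{−1} · exp( −B_ρ(x,y)/(2t(1−ρ²)) ) dt = (π√(1−ρ²))^{−1} · ∫₀^∞ cos(u v)/√(1+v²) dv, where u := √( 2 r B_ρ(x,y)/(1−ρ²) ). -/

import Mathlib

open MeasureTheory Real Filter
open scoped Topology

/-- `B_ρ(x,y) = x² − 2ρxy + y²`. -/
noncomputable def Brho (ρ x y : ℝ) : ℝ := x ^ 2 - 2 * ρ * x * y + y ^ 2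

namespace LaplaceAux

open Set

lemma cosGaussR {s : ℝ} (hs : 0 < s) (u : ℝ) :
    ∫ v : ℝ, Real.cos (u * v) * Real.exp (-(s * v ^ 2))
      = Real.sqrt (π / s) * Real.exp (-(u ^ 2 / (4 * s))) := by
  have hb : ((-s : ℂ)).re < 0 := by simpa using hs
  have h1 := integral_cexp_quadratic hb (Complex.I * u) 0
  have h2 := integral_cexp_quadratic hb (-(Complex.I * u)) 0
  have hint1 := integrable_cexp_quadratic' hb (Complex.I * u) 0
  have hint2 := integrable_cexp_quadratic' hb (-(Complex.I * u)) 0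
  have hadd := integral_add hint1 hint2
  rw [h1, h2] at hadd
  have hpt : ∀ v : ℝ, Complex.exp (-s * v ^ 2 + Complex.I * u * v + 0)
      + Complex.exp (-s * v ^ 2 + -(Complex.I * u) * v + 0)
      = 2 * ((Real.cos (u * v) * Real.exp (-(s * v ^ 2)) : ℝ) : ℂ) := by
    intro v
    have h2c := Complex.two_cos (x := ((u * v : ℝ) : ℂ))
    push_cast
    rw [show (-(s:ℂ) * v ^ 2 + Complex.I * u * v + 0 : ℂ)
        = ((u:ℂ) * v) * Complex.I + -((s:ℂ) * v ^ 2) by ring,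
      show (-(s:ℂ) * v ^ 2 + -(Complex.I * u) * v + 0 : ℂ)
        = -((u:ℂ) * v) * Complex.I + -((s:ℂ) * v ^ 2) by ring,
      Complex.exp_add, Complex.exp_add, ← add_mul]
    push_cast at h2c
    rw [← h2c]
    ring
  simp_rw [hpt] at hadd
  rw [integral_const_mul] at hadd
  have hOR : (∫ a : ℝ, ((Real.cos (u * a) * Real.exp (-(s * a ^ 2)) : ℝ) : ℂ))
      = ((∫ a : ℝ, Real.cos (u * a) * Real.exp (-(s * a ^ 2)) : ℝ) : ℂ) := by
    exact integral_ofReal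
  rw [hOR] at hadd
  have hrhs : ((π : ℂ) / -(-s : ℂ)) ^ (1 / 2 : ℂ) * Complex.exp (0 - (Complex.I * u) ^ 2 / (4 * (-s : ℂ)))
      + ((π : ℂ) / -(-s : ℂ)) ^ (1 / 2 : ℂ) * Complex.exp (0 - (-(Complex.I * u)) ^ 2 / (4 * (-s : ℂ)))
      = 2 * ((Real.sqrt (π / s) * Real.exp (-(u ^ 2 / (4 * s))) : ℝ) : ℂ) := by
    have e1 : (0 : ℂ) - (Complex.I * u) ^ 2 / (4 * (-s : ℂ)) = ((-(u ^ 2 / (4 * s)) : ℝ) : ℂ) := by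
      push_cast
      have : (Complex.I * u) ^ 2 = -(u:ℂ)^2 := by
        rw [mul_pow, Complex.I_sq]; ring
      rw [this]
      field_simp
      ring
    have e2 : (0 : ℂ) - (-(Complex.I * u)) ^ 2 / (4 * (-s : ℂ)) = ((-(u ^ 2 / (4 * s)) : ℝ) : ℂ) := by
      rw [neg_pow, ← e1]; ring_nf
    have e3 : ((π : ℂ) / -(-s : ℂ)) ^ (1 / 2 : ℂ) = ((Real.sqrt (π / s) : ℝ) : ℂ) := by
      rw [neg_neg, show ((π : ℂ) / s) = ((π / s : ℝ) : ℂ) by push_cast; ring,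
        show ((1 : ℂ)/2) = ((1/2 : ℝ) : ℂ) by norm_num,
        ← Complex.ofReal_cpow (by positivity), Real.sqrt_eq_rpow]
    rw [e1, e2, e3, ← Complex.ofReal_exp]
    push_cast
    ring
  rw [hrhs] at hadd
  have := mul_left_cancel₀ (two_ne_zero' ℂ) hadd
  exact_mod_cast this

lemma cosGauss {s : ℝ} (hs : 0 < s) (u : ℝ) :
    ∫ v in Ioi (0:ℝ), Real.cos (u * v) * Real.exp (-(s * v ^ 2))
      = Real.sqrt (π / s) * Real.exp (-(u ^ 2 / (4 * s))) / 2 := by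
  have habs : (fun v : ℝ => Real.cos (u * |v|) * Real.exp (-(s * |v| ^ 2)))
      = fun v : ℝ => Real.cos (u * v) * Real.exp (-(s * v ^ 2)) := by
    funext v
    rcases abs_choice v with h | h
    · rw [h]
    · rw [h]
      rw [show u * -v = -(u * v) by ring, Real.cos_neg]
      ring_nf
  have h2 := integral_comp_abs (f := fun v : ℝ => Real.cos (u * v) * Real.exp (-(s * v ^ 2)))
  rw [habs, cosGaussR hs u] at h2
  linarith

lemma integrableCosGauss {s : ℝ} (hs : 0 < s) (u : ℝ) :
    IntegrableOn (fun v : ℝ => Real.cos (u * v) * Real.exp (-(s * v ^ 2))) (Ioi (0:ℝ)) := by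
  refine (Integrable.integrableOn ?_)
  apply Integrable.mono' (g := fun v : ℝ => Real.exp (-(s * v ^ 2)))
  · simpa [neg_mul] using integrable_exp_neg_mul_sq hs
  · apply Continuous.aestronglyMeasurable
    fun_prop
  · filter_upwards with v
    rw [norm_mul, Real.norm_eq_abs, Real.norm_eq_abs, abs_of_pos (Real.exp_pos _)]
    calc |Real.cos (u * v)| * Real.exp (-(s * v ^ 2))
        ≤ 1 * Real.exp (-(s * v ^ 2)) :=
          mul_le_mul_of_nonneg_right (Real.abs_cos_le_one _) (Real.exp_pos _).le
      _ = Real.exp (-(s * v ^ 2)) := one_mul _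

lemma integrableSinGauss {s : ℝ} (hs : 0 < s) (u : ℝ) :
    IntegrableOn (fun v : ℝ => Real.sin (u * v) * (v * Real.exp (-(s * v ^ 2)))) (Ioi (0:ℝ)) := by
  refine (Integrable.integrableOn ?_)
  apply Integrable.mono' (g := fun v : ℝ => |v| * Real.exp (-(s * v ^ 2)))
  · have := (integrable_mul_exp_neg_mul_sq hs).abs
    apply this.congr
    filter_upwards with v
    rw [abs_mul, abs_of_pos (Real.exp_pos _)]
    simp [neg_mul]
  · apply Continuous.aestronglyMeasurable
    fun_prop
  · filter_upwards with v
    rw [norm_mul, norm_mul, Real.norm_eq_abs, Real.norm_eq_abs, Real.norm_eq_abs,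
      abs_of_pos (Real.exp_pos _)]
    calc |Real.sin (u * v)| * (|v| * Real.exp (-(s * v ^ 2)))
        ≤ 1 * (|v| * Real.exp (-(s * v ^ 2))) := by
          apply mul_le_mul_of_nonneg_right (Real.abs_sin_le_one _)
          positivity
      _ = |v| * Real.exp (-(s * v ^ 2)) := one_mul _

lemma sinGauss {s : ℝ} (hs : 0 < s) (u : ℝ) :
    ∫ v in Ioi (0:ℝ), Real.sin (u * v) * (v * Real.exp (-(s * v ^ 2)))
      = u / (2 * s) * (Real.sqrt (π / s) * Real.exp (-(u ^ 2 / (4 * s))) / 2) := by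
  -- integration by parts on [0, R], then R → ∞
  have hV : ∀ v : ℝ, HasDerivAt (fun w : ℝ => -Real.exp (-(s * w ^ 2)) / (2 * s))
      (v * Real.exp (-(s * v ^ 2))) v := by
    intro v
    have h1 : HasDerivAt (fun w : ℝ => -(s * w ^ 2)) (-(s * (2 * v))) v := by
      have := ((hasDerivAt_pow 2 v).const_mul s).neg
      exact this.congr_deriv (by norm_num)
    have h2 := (h1.exp).neg.div_const (2 * s)
    refine h2.congr_deriv (Eq.symm ?_)
    field_simp
  have hU : ∀ v : ℝ, HasDerivAt (fun w : ℝ => Real.sin (u * w)) (u * Real.cos (u * v)) v := by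
    intro v
    have h1 : HasDerivAt (fun w : ℝ => u * w) u v := by
      simpa using (hasDerivAt_id v).const_mul u
    exact ((Real.hasDerivAt_sin (u * v)).comp v h1).congr_deriv (by ring)
  have parts : ∀ R : ℝ, ∫ v in (0:ℝ)..R, Real.sin (u * v) * (v * Real.exp (-(s * v ^ 2)))
      = Real.sin (u * R) * (-Real.exp (-(s * R ^ 2)) / (2 * s))
        - ∫ v in (0:ℝ)..R, u * Real.cos (u * v) * (-Real.exp (-(s * v ^ 2)) / (2 * s)) := by
    intro R
    have := intervalIntegral.integral_mul_deriv_eq_deriv_mul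
      (u := fun w : ℝ => Real.sin (u * w)) (u' := fun w : ℝ => u * Real.cos (u * w))
      (v := fun w : ℝ => -Real.exp (-(s * w ^ 2)) / (2 * s))
      (v' := fun w : ℝ => w * Real.exp (-(s * w ^ 2)))
      (a := 0) (b := R)
      (fun w _ => hU w) (fun w _ => hV w)
      (by apply Continuous.intervalIntegrable; fun_prop)
      (by apply Continuous.intervalIntegrable; fun_prop)
    rw [this]
    simp
  -- limits
  have h1 : Tendsto (fun R => ∫ v in (0:ℝ)..R, Real.sin (u * v) * (v * Real.exp (-(s * v ^ 2))))
      atTop (𝓝 (∫ v in Ioi (0:ℝ), Real.sin (u * v) * (v * Real.exp (-(s * v ^ 2))))) :=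
    intervalIntegral_tendsto_integral_Ioi _ (integrableSinGauss hs u) tendsto_id
  have h2 : Tendsto (fun R => Real.sin (u * R) * (-Real.exp (-(s * R ^ 2)) / (2 * s))
      - ∫ v in (0:ℝ)..R, u * Real.cos (u * v) * (-Real.exp (-(s * v ^ 2)) / (2 * s)))
      atTop (𝓝 (0 - ∫ v in Ioi (0:ℝ),
        u * Real.cos (u * v) * (-Real.exp (-(s * v ^ 2)) / (2 * s)))) := by
    apply Tendsto.sub
    · apply squeeze_zero_norm (a := fun R : ℝ => Real.exp (-(s * R ^ 2)) / (2 * s))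
      · intro R
        rw [norm_mul, Real.norm_eq_abs, Real.norm_eq_abs, abs_div, abs_neg,
          abs_of_pos (Real.exp_pos _), abs_of_pos (by positivity : (0:ℝ) < 2 * s)]
        calc |Real.sin (u * R)| * (Real.exp (-(s * R ^ 2)) / (2 * s))
            ≤ 1 * (Real.exp (-(s * R ^ 2)) / (2 * s)) := by
              apply mul_le_mul_of_nonneg_right (Real.abs_sin_le_one _)
              positivity
          _ = Real.exp (-(s * R ^ 2)) / (2 * s) := one_mul _
      · have hsq : Tendsto (fun R : ℝ => s * R ^ 2) atTop atTop :=
          (tendsto_pow_atTop (by norm_num)).const_mul_atTop hs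
        have : Tendsto (fun R : ℝ => Real.exp (-(s * R ^ 2))) atTop (𝓝 0) :=
          Real.tendsto_exp_atBot.comp (tendsto_neg_atTop_atBot.comp hsq)
        simpa using this.div_const (2 * s)
    · exact intervalIntegral_tendsto_integral_Ioi _
        (((integrableCosGauss hs u).const_mul (-(u / (2 * s)))).congr
          (Filter.Eventually.of_forall fun v => by ring)) tendsto_id
  have h3 := h2.congr (fun R => (parts R).symm)
  have h4 := tendsto_nhds_unique h1 h3
  rw [h4, zero_sub, show (∫ v in Ioi (0:ℝ),
      u * Real.cos (u * v) * (-Real.exp (-(s * v ^ 2)) / (2 * s)))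
      = (-(u / (2 * s))) * ∫ v in Ioi (0:ℝ), Real.cos (u * v) * Real.exp (-(s * v ^ 2)) by
    rw [← integral_const_mul]
    exact integral_congr_ae (Filter.Eventually.of_forall fun v => by ring),
    cosGauss hs u]
  ring

lemma sqrtCube {A : ℝ} (hA : 0 < A) : (1 / A) ^ ((3:ℝ)/2) = ((Real.sqrt A) ^ 3)⁻¹ := by
  rw [one_div, Real.inv_rpow hA.le, Real.sqrt_eq_rpow,
    ← Real.rpow_natCast (A ^ ((1:ℝ)/2)) 3, ← Real.rpow_mul hA.le]
  norm_num

lemma gammaRep {A : ℝ} (hA : 0 < A) :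
    ∫ s in Ioi (0:ℝ), Real.sqrt s * Real.exp (-(A * s))
      = Real.sqrt π / 2 * ((Real.sqrt A) ^ 3)⁻¹ := by
  have h := Real.integral_rpow_mul_exp_neg_mul_Ioi (a := (3:ℝ)/2) (r := A) (by norm_num) hA
  have hcong : ∀ s ∈ Ioi (0:ℝ), s ^ ((3:ℝ)/2 - 1) * Real.exp (-(A * s))
      = Real.sqrt s * Real.exp (-(A * s)) := by
    intro s hs
    rw [show (3:ℝ)/2 - 1 = 1/2 by norm_num, ← Real.sqrt_eq_rpow]
  rw [setIntegral_congr_fun measurableSet_Ioi hcong] at h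
  rw [h]
  have hG : Real.Gamma ((3:ℝ)/2) = Real.sqrt π / 2 := by
    rw [show (3:ℝ)/2 = 1/2 + 1 by norm_num, Real.Gamma_add_one (by norm_num),
      Real.Gamma_one_half_eq]
    ring
  rw [hG, sqrtCube hA]
  ring

lemma baseInt {A : ℝ} (hA : 0 < A) :
    IntegrableOn (fun x : ℝ => Real.sqrt x * Real.exp (-(A * x))) (Ioi 0) := by
  have h := integrableOn_rpow_mul_exp_neg_mul_rpow
    (by norm_num : (-1:ℝ) < 1/2) zero_lt_one hA
  refine h.congr_fun (fun x hx => ?_) measurableSet_Ioi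
  beta_reduce
  rw [Real.rpow_one, ← Real.sqrt_eq_rpow, neg_mul]

lemma Jval {u : ℝ} (hu : 0 < u) :
    ∫ v in Ioi (0:ℝ), Real.sin (u * v) * v / (Real.sqrt (1 + v ^ 2)) ^ 3
      = u / 2 * ∫ s in Ioi (0:ℝ), Real.exp (-s - u ^ 2 / (4 * s)) / s := by
  set f : ℝ → ℝ → ℝ :=
    fun v s => Real.sin (u * v) * v * (Real.sqrt s * Real.exp (-((1 + v ^ 2) * s))) with hf
  have hsqpi : (0:ℝ) < Real.sqrt π := Real.sqrt_pos.mpr Real.pi_pos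
  have hA : ∀ v : ℝ, (0:ℝ) < 1 + v ^ 2 := fun v => by positivity
  have hsA : ∀ v : ℝ, (0:ℝ) < Real.sqrt (1 + v ^ 2) :=
    fun v => Real.sqrt_pos.mpr (hA v)
  -- continuity of the uncurried functions
  have hFcont : Continuous (Function.uncurry f) := by
    apply Continuous.mul
    · fun_prop
    · apply Continuous.mul
      · exact Real.continuous_sqrt.comp continuous_snd
      · fun_prop
  have hGcont : Continuous (fun p : ℝ × ℝ =>
      p.1 * (Real.sqrt p.2 * Real.exp (-((1 + p.1 ^ 2) * p.2)))) := by
    apply Continuous.mul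
    · fun_prop
    · apply Continuous.mul
      · exact Real.continuous_sqrt.comp continuous_snd
      · fun_prop
  set μ := volume.restrict (Ioi (0:ℝ)) with hμ
  -- integrability of dominating function g on the product
  have hprodrestrict : μ.prod μ = (volume.prod volume).restrict ((Ioi (0:ℝ)) ×ˢ (Ioi (0:ℝ))) :=
    Measure.prod_restrict _ _
  have hg_int : Integrable (fun p : ℝ × ℝ =>
      p.1 * (Real.sqrt p.2 * Real.exp (-((1 + p.1 ^ 2) * p.2)))) (μ.prod μ) := by
    rw [integrable_prod_iff (hGcont.aestronglyMeasurable)]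
    constructor
    · filter_upwards with v
      exact ((baseInt (hA v)).const_mul v)
    · -- v ↦ ∫ s, ‖ v * (√s e^{-(1+v²)s}) ‖
      have hval : (fun v : ℝ => ∫ s, ‖v * (Real.sqrt s * Real.exp (-((1 + v ^ 2) * s)))‖ ∂μ)
          =ᶠ[ae μ] (fun v : ℝ => v * (Real.sqrt π / 2 * ((Real.sqrt (1 + v ^ 2)) ^ 3)⁻¹)) := by
        rw [hμ]
        filter_upwards [ae_restrict_mem measurableSet_Ioi] with v hv
        have : ∀ s : ℝ, ‖v * (Real.sqrt s * Real.exp (-((1 + v ^ 2) * s)))‖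
            = v * (Real.sqrt s * Real.exp (-((1 + v ^ 2) * s))) := by
          intro s
          rw [Real.norm_eq_abs, abs_of_nonneg]
          have := Real.sqrt_nonneg s
          have := (Real.exp_pos (-((1 + v ^ 2) * s))).le
          have : (0:ℝ) < v := hv
          positivity
        simp_rw [this]
        rw [integral_const_mul, gammaRep (hA v)]
      apply Integrable.congr ?_ hval.symm
      apply Integrable.mono' (g := fun v : ℝ => Real.sqrt π / 2 * (1 + v ^ 2)⁻¹)
      · exact (integrable_inv_one_add_sq.const_mul _).restrict
      · apply Continuous.aestronglyMeasurable
        refine continuous_id.mul (continuous_const.mul (Continuous.inv₀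
          ((Real.continuous_sqrt.comp (by fun_prop)).pow 3) fun v => by positivity))
      · rw [hμ]
        filter_upwards [ae_restrict_mem measurableSet_Ioi] with v hv
        have hv' : (0:ℝ) < v := hv
        rw [Real.norm_eq_abs, abs_of_nonneg (by positivity)]
        have hle : v ≤ Real.sqrt (1 + v ^ 2) := by
          nlinarith [Real.sq_sqrt (hA v).le, Real.sqrt_nonneg (1 + v ^ 2)]
        have hcube : (Real.sqrt (1 + v ^ 2)) ^ 3 = (1 + v ^ 2) * Real.sqrt (1 + v ^ 2) := by
          rw [pow_succ, Real.sq_sqrt (hA v).le]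
        have h3 : v * ((Real.sqrt (1 + v ^ 2)) ^ 3)⁻¹ ≤ (1 + v ^ 2)⁻¹ := by
          rw [hcube, mul_inv]
          calc v * ((1 + v ^ 2)⁻¹ * (Real.sqrt (1 + v ^ 2))⁻¹)
              = (v / Real.sqrt (1 + v ^ 2)) * (1 + v ^ 2)⁻¹ := by
                rw [div_eq_mul_inv]; ring
            _ ≤ 1 * (1 + v ^ 2)⁻¹ := mul_le_mul_of_nonneg_right
                ((div_le_one (hsA v)).mpr hle) (by positivity)
            _ = (1 + v ^ 2)⁻¹ := one_mul _
        calc v * (Real.sqrt π / 2 * ((Real.sqrt (1 + v ^ 2)) ^ 3)⁻¹)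
            = Real.sqrt π / 2 * (v * ((Real.sqrt (1 + v ^ 2)) ^ 3)⁻¹) := by ring
          _ ≤ Real.sqrt π / 2 * (1 + v ^ 2)⁻¹ :=
              mul_le_mul_of_nonneg_left h3 (by positivity)
  -- integrability of f on the product
  have hf_int : Integrable (Function.uncurry f) (μ.prod μ) := by
    apply hg_int.mono' hFcont.aestronglyMeasurable
    rw [hprodrestrict]
    filter_upwards [ae_restrict_mem (measurableSet_Ioi.prod measurableSet_Ioi)] with p hp
    obtain ⟨hp1, hp2⟩ := hp
    have hv : (0:ℝ) < p.1 := hp1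
    rw [Function.uncurry, hf]
    simp only
    rw [Real.norm_eq_abs, abs_mul, abs_mul]
    rw [abs_of_nonneg (by positivity : (0:ℝ) ≤ Real.sqrt p.2 * Real.exp (-((1 + p.1 ^ 2) * p.2))),
      abs_of_pos hv]
    have h1 := Real.abs_sin_le_one (u * p.1)
    have hX : (0:ℝ) ≤ Real.sqrt p.2 * Real.exp (-((1 + p.1 ^ 2) * p.2)) := by positivity
    calc |Real.sin (u * p.1)| * p.1 * (Real.sqrt p.2 * Real.exp (-((1 + p.1 ^ 2) * p.2)))
        ≤ 1 * p.1 * (Real.sqrt p.2 * Real.exp (-((1 + p.1 ^ 2) * p.2))) := by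
          apply mul_le_mul_of_nonneg_right (mul_le_mul_of_nonneg_right h1 hv.le) hX
      _ = p.1 * (Real.sqrt p.2 * Real.exp (-((1 + p.1 ^ 2) * p.2))) := by ring
  -- step 1 : pointwise identity on Ioi 0
  have step1 : ∀ v ∈ Ioi (0:ℝ), Real.sin (u * v) * v / (Real.sqrt (1 + v ^ 2)) ^ 3
      = 2 / Real.sqrt π * ∫ s in Ioi (0:ℝ), f v s := by
    intro v hv
    rw [hf]
    simp only
    rw [integral_const_mul, gammaRep (hA v)]
    have h1 : ((Real.sqrt (1 + v ^ 2)) ^ 3) ≠ 0 := by positivity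
    field_simp
  rw [setIntegral_congr_fun measurableSet_Ioi step1, integral_const_mul,
    integral_integral_swap hf_int]
  -- step 3 : inner v-integral
  have step3 : ∀ s ∈ Ioi (0:ℝ), (∫ v in Ioi (0:ℝ), f v s)
      = (Real.sqrt s * Real.exp (-s)) *
        (u / (2 * s) * (Real.sqrt (π / s) * Real.exp (-(u ^ 2 / (4 * s))) / 2)) := by
    intro s hs
    have hs' : (0:ℝ) < s := hs
    have hpt : ∀ v : ℝ, f v s = (Real.sqrt s * Real.exp (-s)) *
        (Real.sin (u * v) * (v * Real.exp (-(s * v ^ 2)))) := by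
      intro v
      rw [hf]
      simp only
      rw [show -((1 + v ^ 2) * s) = -s + -(s * v ^ 2) by ring, Real.exp_add]
      ring
    simp_rw [hpt]
    rw [integral_const_mul, sinGauss hs' u]
  rw [setIntegral_congr_fun measurableSet_Ioi step3]
  -- final simplification
  have final : ∀ s ∈ Ioi (0:ℝ),
      (2 / Real.sqrt π) * ((Real.sqrt s * Real.exp (-s)) *
        (u / (2 * s) * (Real.sqrt (π / s) * Real.exp (-(u ^ 2 / (4 * s))) / 2)))
      = u / 2 * (Real.exp (-s - u ^ 2 / (4 * s)) / s) := by
    intro s hs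
    have hs' : (0:ℝ) < s := hs
    have hss : Real.sqrt s * Real.sqrt s = s := Real.mul_self_sqrt hs'.le
    have hsqs : (0:ℝ) < Real.sqrt s := Real.sqrt_pos.mpr hs'
    rw [Real.sqrt_div Real.pi_pos.le,
      show -s - u ^ 2 / (4 * s) = -s + -(u ^ 2 / (4 * s)) by ring, Real.exp_add]
    field_simp
  rw [← integral_const_mul, setIntegral_congr_fun measurableSet_Ioi final, integral_const_mul]

lemma K0_tendsto {u : ℝ} (hu : 0 < u) :
    Tendsto (fun R => ∫ v in (0:ℝ)..R, Real.cos (u * v) / Real.sqrt (1 + v ^ 2)) atTop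
      (𝓝 (1 / 2 * ∫ s in Ioi (0:ℝ), Real.exp (-s - u ^ 2 / (4 * s)) / s)) := by
  have hA : ∀ v : ℝ, (0:ℝ) < 1 + v ^ 2 := fun v => by positivity
  have hsA : ∀ v : ℝ, (0:ℝ) < Real.sqrt (1 + v ^ 2) := fun v => Real.sqrt_pos.mpr (hA v)
  -- derivatives
  have hsq : ∀ v : ℝ, HasDerivAt (fun w : ℝ => Real.sqrt (1 + w ^ 2))
      (v / Real.sqrt (1 + v ^ 2)) v := by
    intro v
    have h1 : HasDerivAt (fun w : ℝ => 1 + w ^ 2) (2 * v) v := by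
      simpa using (hasDerivAt_pow 2 v).const_add 1
    have h2 := (Real.hasDerivAt_sqrt (hA v).ne').comp v h1
    refine h2.congr_deriv (Eq.symm ?_)
    field_simp
  have hP : ∀ v : ℝ, HasDerivAt (fun w : ℝ => (Real.sqrt (1 + w ^ 2))⁻¹)
      (-(v / (Real.sqrt (1 + v ^ 2)) ^ 3)) v := by
    intro v
    have h2 := (hsq v).inv (hsA v).ne'
    refine h2.congr_deriv (Eq.symm ?_)
    rw [pow_succ, Real.sq_sqrt (hA v).le]
    field_simp
  have hQ : ∀ v : ℝ, HasDerivAt (fun w : ℝ => Real.sin (u * w) / u)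
      (Real.cos (u * v)) v := by
    intro v
    have h1 : HasDerivAt (fun w : ℝ => u * w) u v := by
      simpa using (hasDerivAt_id v).const_mul u
    have h2 := ((Real.hasDerivAt_sin (u * v)).comp v h1).div_const u
    refine h2.congr_deriv (Eq.symm ?_)
    field_simp
  -- integration by parts
  have parts : ∀ R : ℝ, ∫ v in (0:ℝ)..R, Real.cos (u * v) / Real.sqrt (1 + v ^ 2)
      = (Real.sqrt (1 + R ^ 2))⁻¹ * (Real.sin (u * R) / u)
        + ∫ v in (0:ℝ)..R, (v / (Real.sqrt (1 + v ^ 2)) ^ 3) * (Real.sin (u * v) / u) := by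
    intro R
    have h := intervalIntegral.integral_mul_deriv_eq_deriv_mul
      (u := fun w : ℝ => (Real.sqrt (1 + w ^ 2))⁻¹)
      (u' := fun w : ℝ => -(w / (Real.sqrt (1 + w ^ 2)) ^ 3))
      (v := fun w : ℝ => Real.sin (u * w) / u)
      (v' := fun w : ℝ => Real.cos (u * w))
      (a := 0) (b := R)
      (fun w _ => hP w) (fun w _ => hQ w)
      (by apply Continuous.intervalIntegrable
          apply Continuous.neg
          apply Continuous.div (by fun_prop) ((Real.continuous_sqrt.comp (by fun_prop)).pow 3)
          exact fun w => pow_ne_zero _ (hsA w).ne')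
      (by apply Continuous.intervalIntegrable; fun_prop)
    have e1 : ∀ v : ℝ, (Real.sqrt (1 + v ^ 2))⁻¹ * Real.cos (u * v)
        = Real.cos (u * v) / Real.sqrt (1 + v ^ 2) := fun v => by
      rw [div_eq_mul_inv]; ring
    simp_rw [e1] at h
    rw [h]
    simp only [Real.sin_zero, mul_zero, zero_mul, zero_div, sub_zero]
    rw [show (∫ v in (0:ℝ)..R, -(v / (Real.sqrt (1 + v ^ 2)) ^ 3) * (Real.sin (u * v) / u))
        = -∫ v in (0:ℝ)..R, (v / (Real.sqrt (1 + v ^ 2)) ^ 3) * (Real.sin (u * v) / u) by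
      rw [← intervalIntegral.integral_neg]
      congr 1
      funext v
      ring]
    ring
  -- integrability of the tail integrand on Ioi 0
  have htail : IntegrableOn
      (fun v : ℝ => (v / (Real.sqrt (1 + v ^ 2)) ^ 3) * (Real.sin (u * v) / u)) (Ioi 0) := by
    apply Integrable.mono' (g := fun v : ℝ => (1 / u) * (1 + v ^ 2)⁻¹)
    · exact (integrable_inv_one_add_sq.const_mul _).restrict
    · apply Continuous.aestronglyMeasurable
      apply Continuous.mul
      · apply Continuous.div (by fun_prop) ((Real.continuous_sqrt.comp (by fun_prop)).pow 3)
        exact fun w => pow_ne_zero _ (hsA w).ne'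
      · fun_prop
    · filter_upwards [ae_restrict_mem measurableSet_Ioi] with v hv
      have hv' : (0:ℝ) < v := hv
      have hle : v ≤ Real.sqrt (1 + v ^ 2) := by
        nlinarith [Real.sq_sqrt (hA v).le, Real.sqrt_nonneg (1 + v ^ 2)]
      have hcube : (Real.sqrt (1 + v ^ 2)) ^ 3 = (1 + v ^ 2) * Real.sqrt (1 + v ^ 2) := by
        rw [pow_succ, Real.sq_sqrt (hA v).le]
      have h3 : v / (Real.sqrt (1 + v ^ 2)) ^ 3 ≤ (1 + v ^ 2)⁻¹ := by
        rw [hcube, div_eq_mul_inv, mul_inv]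
        calc v * ((1 + v ^ 2)⁻¹ * (Real.sqrt (1 + v ^ 2))⁻¹)
            = (v / Real.sqrt (1 + v ^ 2)) * (1 + v ^ 2)⁻¹ := by
              rw [div_eq_mul_inv]; ring
          _ ≤ 1 * (1 + v ^ 2)⁻¹ := mul_le_mul_of_nonneg_right
              ((div_le_one (hsA v)).mpr hle) (by positivity)
          _ = (1 + v ^ 2)⁻¹ := one_mul _
      simp only [norm_mul, norm_div, Real.norm_eq_abs]
      rw [abs_of_pos hv', abs_of_pos (show (0:ℝ) < (Real.sqrt (1 + v ^ 2)) ^ 3 by positivity),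
        abs_of_pos hu]
      calc v / (Real.sqrt (1 + v ^ 2)) ^ 3 * (|Real.sin (u * v)| / u)
          ≤ v / (Real.sqrt (1 + v ^ 2)) ^ 3 * (1 / u) := by
            gcongr
            exact Real.abs_sin_le_one _
          _ ≤ (1 + v ^ 2)⁻¹ * (1 / u) := mul_le_mul_of_nonneg_right h3 (by positivity)
          _ = 1 / u * (1 + v ^ 2)⁻¹ := by ring
  -- limits
  have hb : Tendsto (fun R : ℝ => (Real.sqrt (1 + R ^ 2))⁻¹ * (Real.sin (u * R) / u))
      atTop (𝓝 0) := by
    apply squeeze_zero_norm (a := fun R : ℝ => (Real.sqrt (1 + R ^ 2))⁻¹ * (1 / u))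
    · intro R
      simp only [norm_mul, norm_inv, norm_div, Real.norm_eq_abs]
      rw [abs_of_pos (hsA R), abs_of_pos hu]
      gcongr
      exact Real.abs_sin_le_one _
    · have h1 : Tendsto (fun R : ℝ => Real.sqrt (1 + R ^ 2)) atTop atTop := by
        apply tendsto_atTop_mono (fun R => ?_) tendsto_id
        refine le_trans (le_abs_self R) ?_
        rw [← Real.sqrt_sq_eq_abs]
        exact Real.sqrt_le_sqrt (by linarith)
      simpa using (h1.inv_tendsto_atTop).mul_const (1 / u)
  have h2 : Tendsto (fun R => ∫ v in (0:ℝ)..R,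
      (v / (Real.sqrt (1 + v ^ 2)) ^ 3) * (Real.sin (u * v) / u)) atTop
      (𝓝 (∫ v in Ioi (0:ℝ), (v / (Real.sqrt (1 + v ^ 2)) ^ 3) * (Real.sin (u * v) / u))) :=
    intervalIntegral_tendsto_integral_Ioi _ htail tendsto_id
  have h3 := (hb.add h2).congr (fun R => (parts R).symm)
  rw [zero_add] at h3
  have hJ : (∫ v in Ioi (0:ℝ), (v / (Real.sqrt (1 + v ^ 2)) ^ 3) * (Real.sin (u * v) / u))
      = 1 / 2 * ∫ s in Ioi (0:ℝ), Real.exp (-s - u ^ 2 / (4 * s)) / s := by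
    have := Jval hu
    rw [show (∫ v in Ioi (0:ℝ), (v / (Real.sqrt (1 + v ^ 2)) ^ 3) * (Real.sin (u * v) / u))
        = (1 / u) * ∫ v in Ioi (0:ℝ), Real.sin (u * v) * v / (Real.sqrt (1 + v ^ 2)) ^ 3 by
      rw [← integral_const_mul]
      exact setIntegral_congr_fun measurableSet_Ioi (fun v hv => by
        field_simp), this]
    field_simp
    congr 1; funext s; ring_nf
  rw [hJ] at h3
  exact h3

end LaplaceAux

/-- Laplace transform of the bivariate Gaussian density (formula (R1)):
`∫₀^∞ e^{-rt} (2πt√(1-ρ²))⁻¹ exp(−B_ρ(x,y)/(2t(1-ρ²))) dt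
  = (π√(1-ρ²))⁻¹ K₀(√(2r B_ρ(x,y)/(1-ρ²)))`,
where `K₀(u) = ∫₀^∞ cos(uv)/√(1+v²) dv` is understood as an improper integral. -/
theorem laplace_transform_bivariate_gaussian (r ρ : ℝ) (hr : 0 < r)
    (hρ : ρ ∈ Set.Ioo (-1 : ℝ) 1) (x y : ℝ) (hxy : (x, y) ≠ (0, 0)) :
    ∃ K : ℝ,
      Tendsto (fun R => ∫ v in (0 : ℝ)..R,
          Real.cos (Real.sqrt (2 * r * Brho ρ x y / (1 - ρ ^ 2)) * v) /
            Real.sqrt (1 + v ^ 2)) atTop (𝓝 K) ∧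
      (∫ t in Set.Ioi (0 : ℝ),
          Real.exp (-r * t) * (2 * Real.pi * t * Real.sqrt (1 - ρ ^ 2))⁻¹ *
            Real.exp (-Brho ρ x y / (2 * t * (1 - ρ ^ 2))))
        = (Real.pi * Real.sqrt (1 - ρ ^ 2))⁻¹ * K := by
  obtain ⟨hρ1, hρ2⟩ := hρ
  have h1ρ : 0 < 1 - ρ ^ 2 := by nlinarith
  have hc : 0 < Real.sqrt (1 - ρ ^ 2) := Real.sqrt_pos.mpr h1ρ
  have hB : 0 < Brho ρ x y := by
    have hxy' : x ≠ 0 ∨ y ≠ 0 := by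
      by_contra h
      push_neg at h
      exact hxy (by simp [h.1, h.2])
    have hid : 2 * Brho ρ x y = (1 - ρ) * (x + y) ^ 2 + (1 + ρ) * (x - y) ^ 2 := by
      unfold Brho; ring
    have h2 : 0 < (x + y) ^ 2 + (x - y) ^ 2 := by
      rcases hxy' with hx | hy
      · nlinarith [sq_nonneg (x + y), sq_nonneg (x - y), sq_nonneg x, (by positivity : 0 < x ^ 2)]
      · nlinarith [sq_nonneg (x + y), sq_nonneg (x - y), sq_nonneg y, (by positivity : 0 < y ^ 2)]
    rcases le_or_gt ρ 0 with h | h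
    · nlinarith [mul_pos (show (0:ℝ) < 1 + ρ by linarith) h2,
        mul_nonneg (show (0:ℝ) ≤ -2 * ρ by linarith) (sq_nonneg (x + y))]
    · nlinarith [mul_pos (show (0:ℝ) < 1 - ρ by linarith) h2,
        mul_nonneg (show (0:ℝ) ≤ 2 * ρ by linarith) (sq_nonneg (x - y))]
  set B := Brho ρ x y with hBdef
  set u := Real.sqrt (2 * r * B / (1 - ρ ^ 2)) with hudef
  have hu : 0 < u := Real.sqrt_pos.mpr (by positivity)
  have hu2 : u ^ 2 = 2 * r * B / (1 - ρ ^ 2) := Real.sq_sqrt (by positivity)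
  refine ⟨1 / 2 * ∫ s in Set.Ioi (0:ℝ), Real.exp (-s - u ^ 2 / (4 * s)) / s,
    LaplaceAux.K0_tendsto hu, ?_⟩
  -- the integrand of the Laplace transform
  have key : ∀ t ∈ Set.Ioi (0:ℝ),
      Real.exp (-r * t) * (2 * Real.pi * t * Real.sqrt (1 - ρ ^ 2))⁻¹ *
        Real.exp (-B / (2 * t * (1 - ρ ^ 2)))
      = (2 * Real.pi * Real.sqrt (1 - ρ ^ 2))⁻¹ *
          (r * (Real.exp (-(r * t) - u ^ 2 / (4 * (r * t))) / (r * t))) := by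
    intro t ht
    have ht' : (0:ℝ) < t := ht
    have h4 : u ^ 2 / (4 * (r * t)) = B / (2 * t * (1 - ρ ^ 2)) := by
      rw [hu2]; field_simp; ring
    rw [h4, show -(r * t) - B / (2 * t * (1 - ρ ^ 2))
        = -(r * t) + -(B / (2 * t * (1 - ρ ^ 2))) by ring, Real.exp_add]
    rw [show -r * t = -(r * t) by ring]
    field_simp
  rw [setIntegral_congr_fun measurableSet_Ioi key, integral_const_mul]
  have subst : ∫ t in Set.Ioi (0:ℝ),
      r * (Real.exp (-(r * t) - u ^ 2 / (4 * (r * t))) / (r * t))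
      = ∫ s in Set.Ioi (0:ℝ), Real.exp (-s - u ^ 2 / (4 * s)) / s := by
    have := integral_comp_mul_left_Ioi
      (fun s => Real.exp (-s - u ^ 2 / (4 * s)) / s) 0 hr
    simp only [mul_zero] at this
    rw [integral_const_mul, this, smul_eq_mul]
    field_simp
    congr 1; funext s; ring_nf
  rw [subst]
  have hπc : (Real.pi * Real.sqrt (1 - ρ ^ 2)) ≠ 0 := by positivity
  rw [show (2 * Real.pi * Real.sqrt (1 - ρ ^ 2))⁻¹
      = (Real.pi * Real.sqrt (1 - ρ ^ 2))⁻¹ * (1 / 2) by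
    rw [show 2 * Real.pi * Real.sqrt (1 - ρ ^ 2)
        = (Real.pi * Real.sqrt (1 - ρ ^ 2)) * 2 by ring, mul_inv]
    norm_num]
  ring
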